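/- For every prime power q and integer g ≥ 1, the polynomial f(X) = (X² + (2q−1)X + q²)^g is monic of degree 2g with integer coefficients, all of its complex roots have absolute value q, the coefficient of X^{2g−1} in f equals g(2q − 1), and f(−q) = q^g ≠ 0. -/

import Mathlib

open Polynomial

/-- The polynomial `f = (X² + (2q-1)X + q²)^g` is a monic Weil-q²-polynomial
of degree `2g` with `a₁ = g(2q - 1)` and `f(-q) = q^g ≠ 0`; so the bound of the previous
statement is sharp. -/
theorem weil_poly_a1_bound_sharp (q : ℕ) (hq : IsPrimePow q) (g : ℕ) (hg : 1 ≤ g)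
    (f : Polynomial ℤ)
    (hf : f = (X ^ 2 + C (2 * (q : ℤ) - 1) * X + C ((q : ℤ) ^ 2)) ^ g) :
    f.Monic ∧ f.natDegree = 2 * g ∧
    (∀ z : ℂ, Polynomial.aeval z f = 0 → ‖z‖ = q) ∧
    f.coeff (2 * g - 1) = (g : ℤ) * (2 * q - 1) ∧
    f.eval (-(q : ℤ)) = (q : ℤ) ^ g ∧ (q : ℤ) ^ g ≠ 0 := by
  have hq2 : 2 ≤ q := hq.two_le
  set p : Polynomial ℤ := X ^ 2 + C (2 * (q : ℤ) - 1) * X + C ((q : ℤ) ^ 2) with hp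
  have hpm : p.Monic := by
    rw [hp, add_assoc]
    apply monic_X_pow_add
    exact lt_of_le_of_lt degree_linear_le (by norm_num : (1 : WithBot ℕ) < 2)
  have hpd : p.natDegree = 2 := by
    rw [hp]
    compute_degree!
  have hfm : f.Monic := hf ▸ hpm.pow g
  have hfd : f.natDegree = 2 * g := by
    rw [hf, hpm.natDegree_pow, hpd, Nat.mul_comm]
  refine ⟨hfm, hfd, ?_, ?_, ?_, ?_⟩
  · intro z hz
    have hz' : aeval z p = 0 := by
      rw [hf, map_pow] at hz
      exact pow_eq_zero_iff (by omega) |>.mp hz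
    have heq : z ^ 2 + (2 * (q : ℂ) - 1) * z + (q : ℂ) ^ 2 = 0 := by
      have h := hz'
      simp only [hp, map_add, map_mul, map_pow, aeval_X, aeval_C] at h
      push_cast at h
      convert h using 2 <;> push_cast <;> ring_nf <;> norm_num
    have hconj : (starRingEnd ℂ) z ^ 2 + (2 * (q : ℂ) - 1) * (starRingEnd ℂ) z + (q : ℂ) ^ 2 = 0 := by
      have := congrArg (starRingEnd ℂ) heq
      simpa only [map_add, map_mul, map_pow, map_sub, map_one, map_ofNat, map_natCast,
        map_zero] using this
    set w := (starRingEnd ℂ) z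
    have hne : z ≠ w := by
      intro h
      have hzr : (z.im : ℝ) = 0 := by
        have := Complex.conj_eq_iff_im.mp h.symm
        exact this
      -- z is real; show real quadratic has no root
      have hre : z = (z.re : ℂ) := (Complex.conj_eq_iff_re.mp h.symm).symm
      set x := z.re
      have : (x : ℂ) ^ 2 + (2 * (q : ℂ) - 1) * x + (q : ℂ) ^ 2 = 0 := by
        rw [← hre]; exact heq
      have hr : x ^ 2 + (2 * (q : ℝ) - 1) * x + (q : ℝ) ^ 2 = 0 := by
        exact_mod_cast this
      have key : (2 * x + 2 * (q:ℝ) - 1) ^ 2 = 1 - 4 * (q:ℝ) := by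
        linear_combination 4 * hr
      have hq2' : (2:ℝ) ≤ (q:ℝ) := by exact_mod_cast hq2
      nlinarith [sq_nonneg (2 * x + 2 * (q:ℝ) - 1)]
    have hsum : z + w = -(2 * (q : ℂ) - 1) := by
      have hdiff : (z - w) * (z + w + (2 * (q : ℂ) - 1)) = 0 := by
        ring_nf
        linear_combination heq - hconj
      rcases mul_eq_zero.mp hdiff with h | h
      · exact absurd (sub_eq_zero.mp h) hne
      · linear_combination h
    have hprod : z * w = (q : ℂ) ^ 2 := by
      linear_combination z * hsum - heq
    have : (Complex.normSq z : ℂ) = ((q : ℂ)) ^ 2 := by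
      rw [← Complex.mul_conj z]; exact hprod
    have hns : Complex.normSq z = (q : ℝ) ^ 2 := by exact_mod_cast this
    have : ‖z‖ ^ 2 = (q : ℝ) ^ 2 := by
      rw [Complex.sq_norm]; exact hns
    have habs := norm_nonneg z
    nlinarith
  · have h1 : f.coeff (2 * g - 1) = f.nextCoeff := by
      rw [nextCoeff_of_natDegree_pos (by omega : 0 < f.natDegree), hfd]
    rw [h1, hf, hpm.nextCoeff_pow]
    have h2 : p.nextCoeff = 2 * (q : ℤ) - 1 := by
      rw [nextCoeff_of_natDegree_pos (by omega : 0 < p.natDegree), hpd, hp]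
      rw [coeff_add, coeff_add, coeff_X_pow, coeff_C_mul, coeff_X_one, coeff_C]
      norm_num
    rw [h2]
    push_cast
    ring
  · have hev : p.eval (-(q:ℤ)) = q := by
      simp only [hp, eval_add, eval_mul, eval_pow, eval_C, eval_X]
      ring
    rw [hf, eval_pow, hev]
  · positivity
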